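/- Let D be a diagram, i_1 ≠ i_2 two row indices, and D^A the diagram obtained from D by moving boxes from row i_1 to row i_2 within their columns where possible, with φ the induced column-preserving bijection from the boxes of D to the boxes of D^A and all elements associated to D^A regarded in ℂ[Σ_D] via φ. Then for every set Y of right coset representatives of R_D ∩ R_{D^A} in R_{D^A}, the identity C(D^A)·R(D^A) = C(D)·R(D)·(Σ_{σ ∈ Y} σ) holds in ℂ[Σ_D]. -/

import Mathlib

/-- A diagram: a finite set of boxes `(i, j)`. -/
abbrev Dg := Finset (ℕ × ℕ)

/-- The sum `Σ σ` over all permutations preserving the value of `g` (e.g. the row or the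
column of every box), in the group algebra `ℂ[Perm α]`. -/
noncomputable def Rsum {α : Type} [Fintype α] [DecidableEq α] (g : α → ℕ) :
    MonoidAlgebra ℂ (Equiv.Perm α) :=
  ∑ σ ∈ Finset.univ.filter (fun σ : Equiv.Perm α => ∀ b, g (σ b) = g b),
    MonoidAlgebra.single σ 1

/-- The signed sum `Σ sgn(σ)·σ` over all permutations preserving the value of `g`, in the
group algebra `ℂ[Perm α]`. -/
noncomputable def Csum {α : Type} [Fintype α] [DecidableEq α] (g : α → ℕ) :
    MonoidAlgebra ℂ (Equiv.Perm α) :=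
  ∑ σ ∈ Finset.univ.filter (fun σ : Equiv.Perm α => ∀ b, g (σ b) = g b),
    MonoidAlgebra.single σ ((Equiv.Perm.sign σ : ℤ) : ℂ)

theorem Equiv.Perm.apply_inv_self {α : Type*} (f : Equiv.Perm α) (x : α) : f (f⁻¹ x) = x :=
  (Equiv.eq_symm_apply f).mp rfl

theorem Equiv.Perm.inv_apply_self {α : Type*} (f : Equiv.Perm α) (x : α) : f⁻¹ (f x) = x :=
  Equiv.Perm.inv_eq_iff_eq.mpr rfl

section Aux

open Finset MonoidAlgebra

set_option linter.unusedSectionVars false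

variable {α : Type} [Fintype α] [DecidableEq α]

lemma Rsum_exists (g : α → ℕ) :
    ∃ s : Finset (Equiv.Perm α), (∀ σ, σ ∈ s ↔ ∀ b, g (σ b) = g b) ∧
      Rsum g = ∑ σ ∈ s, MonoidAlgebra.single σ (1 : ℂ) :=
  ⟨Finset.univ.filter (fun σ : Equiv.Perm α => ∀ b, g (σ b) = g b),
    fun σ => by simp, rfl⟩

lemma Csum_exists (g : α → ℕ) :
    ∃ s : Finset (Equiv.Perm α), (∀ σ, σ ∈ s ↔ ∀ b, g (σ b) = g b) ∧
      Csum g = ∑ σ ∈ s, MonoidAlgebra.single σ (((Equiv.Perm.sign σ : ℤ)) : ℂ) :=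
  ⟨Finset.univ.filter (fun σ : Equiv.Perm α => ∀ b, g (σ b) = g b),
    fun σ => by simp, rfl⟩

/-- Left multiplication by an element stabilizing the index set fixes an unsigned sum. -/
lemma aux_left_mul (r : Equiv.Perm α) (s : Finset (Equiv.Perm α))
    (h : ∀ g, g ∈ s ↔ r * g ∈ s) :
    MonoidAlgebra.single r (1 : ℂ) * (∑ σ ∈ s, MonoidAlgebra.single σ (1 : ℂ)) =
      ∑ σ ∈ s, MonoidAlgebra.single σ (1 : ℂ) := by
  rw [Finset.mul_sum]
  simp only [MonoidAlgebra.single_mul_single, one_mul]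
  exact Finset.sum_equiv (Equiv.mulLeft r) (fun i => by simpa using h i) (fun i _ => rfl)

/-- Right multiplication by an odd element stabilizing the index set negates a signed sum. -/
lemma aux_right_mul_sign (c : Equiv.Perm α) (s : Finset (Equiv.Perm α))
    (h : ∀ g, g ∈ s ↔ g * c ∈ s) (hc : Equiv.Perm.sign c = -1) :
    (∑ σ ∈ s, MonoidAlgebra.single σ (((Equiv.Perm.sign σ : ℤ) : ℂ))) *
        MonoidAlgebra.single c (1 : ℂ) =
      - ∑ σ ∈ s, MonoidAlgebra.single σ (((Equiv.Perm.sign σ : ℤ) : ℂ)) := by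
  rw [Finset.sum_mul, ← Finset.sum_neg_distrib]
  refine Finset.sum_equiv (Equiv.mulRight c) (fun i => by simpa using h i) (fun i _ => ?_)
  simp only [Equiv.coe_mulRight, MonoidAlgebra.single_mul_single, mul_one]
  rw [show ((Equiv.Perm.sign (i * c) : ℤ) : ℂ) = -((Equiv.Perm.sign i : ℤ) : ℂ) by
    rw [map_mul, hc]; push_cast; ring]
  rw [show MonoidAlgebra.single (i * c) (-((Equiv.Perm.sign i : ℤ) : ℂ))
      = -MonoidAlgebra.single (i * c) ((Equiv.Perm.sign i : ℤ) : ℂ) from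
    MonoidAlgebra.single_neg _ _, neg_neg]

end Aux

/-- With `D^A` and `φ` as above and `Y` a set of right coset
representatives of `R_D ∩ R_{D^A}` in `R_{D^A}`,
`C(D^A) · R(D^A) = C(D) · R(D) · (Σ_{σ ∈ Y} σ)` in `ℂ[Σ_D]`. -/
theorem statement12 (D DA : Dg) (i1 i2 : ℕ) (h12 : i1 ≠ i2)
    (hDA1 : ∀ p q : ℕ, p ≠ i1 → p ≠ i2 → ((p, q) ∈ DA ↔ (p, q) ∈ D))
    (hDA2 : ∀ q : ℕ, (i1, q) ∈ DA ↔ ((i1, q) ∈ D ∧ (i2, q) ∈ D))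
    (hDA3 : ∀ q : ℕ, (i2, q) ∈ DA ↔ ((i1, q) ∈ D ∨ (i2, q) ∈ D))
    (φ : {x : ℕ × ℕ // x ∈ D} ≃ {x : ℕ × ℕ // x ∈ DA})
    (hφ : ∀ b : {x : ℕ × ℕ // x ∈ D},
      (φ b).val = if b.val.1 = i1 ∧ (i2, b.val.2) ∉ D then (i2, b.val.2) else b.val)
    (Y : Finset (Equiv.Perm {x : ℕ × ℕ // x ∈ D}))
    (hY1 : ∀ σ ∈ Y, ∀ b, (φ (σ b)).val.1 = (φ b).val.1)
    (hY2 : ∀ τ : Equiv.Perm {x : ℕ × ℕ // x ∈ D}, (∀ b, (φ (τ b)).val.1 = (φ b).val.1) →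
      ∃! σ, σ ∈ Y ∧ (∀ b, ((τ * σ⁻¹) b).val.1 = b.val.1) ∧
        (∀ b, (φ ((τ * σ⁻¹) b)).val.1 = (φ b).val.1))
    :
    Csum (fun b : {x : ℕ × ℕ // x ∈ D} => (φ b).val.2) *
        Rsum (fun b : {x : ℕ × ℕ // x ∈ D} => (φ b).val.1) =
      Csum (fun b : {x : ℕ × ℕ // x ∈ D} => b.val.2) *
        Rsum (fun b : {x : ℕ × ℕ // x ∈ D} => b.val.1) *
        (∑ σ ∈ Y, MonoidAlgebra.single σ (1 : ℂ)) := by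
  have hφ2 : ∀ b : {x : ℕ × ℕ // x ∈ D}, (φ b).val.2 = b.val.2 := by
    intro b; rw [hφ]; split <;> rfl
  have hφ1 : ∀ b : {x : ℕ × ℕ // x ∈ D},
      (φ b).val.1 = if b.val.1 = i1 ∧ (i2, b.val.2) ∉ D then i2 else b.val.1 := by
    intro b; rw [hφ]; split <;> rfl
  rw [show (fun b : {x : ℕ × ℕ // x ∈ D} => (φ b).val.2)
      = (fun b : {x : ℕ × ℕ // x ∈ D} => b.val.2) from funext hφ2]
  obtain ⟨PA, hPA, eRA⟩ := Rsum_exists (fun b : {x : ℕ × ℕ // x ∈ D} => (φ b).val.1)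
  obtain ⟨PB, hPB, eRB⟩ := Rsum_exists (fun b : {x : ℕ × ℕ // x ∈ D} => b.val.1)
  obtain ⟨PC, hPC, eC⟩ := Csum_exists (fun b : {x : ℕ × ℕ // x ∈ D} => b.val.2)
  rw [eRA, eRB, eC]
  set C := ∑ σ ∈ PC, MonoidAlgebra.single σ (((Equiv.Perm.sign σ : ℤ)) : ℂ) with hCdef
  -- closure properties
  have hAmul : ∀ σ τ : Equiv.Perm {x : ℕ × ℕ // x ∈ D},
      (∀ b, (φ (σ b)).val.1 = (φ b).val.1) → (∀ b, (φ (τ b)).val.1 = (φ b).val.1) →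
      (∀ b, (φ ((σ * τ) b)).val.1 = (φ b).val.1) := by
    intro σ τ hσ hτ b
    rw [Equiv.Perm.mul_apply, hσ, hτ]
  have hAinv : ∀ σ : Equiv.Perm {x : ℕ × ℕ // x ∈ D},
      (∀ b, (φ (σ b)).val.1 = (φ b).val.1) → (∀ b, (φ (σ⁻¹ b)).val.1 = (φ b).val.1) := by
    intro σ hσ b
    have := hσ (σ⁻¹ b)
    rw [Equiv.Perm.apply_inv_self] at this
    exact this.symm
  have hBmul : ∀ σ τ : Equiv.Perm {x : ℕ × ℕ // x ∈ D},
      (∀ b, (σ b).val.1 = b.val.1) → (∀ b, (τ b).val.1 = b.val.1) →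
      (∀ b, ((σ * τ) b).val.1 = b.val.1) := by
    intro σ τ hσ hτ b
    rw [Equiv.Perm.mul_apply, hσ, hτ]
  have hBinv : ∀ σ : Equiv.Perm {x : ℕ × ℕ // x ∈ D},
      (∀ b, (σ b).val.1 = b.val.1) → (∀ b, (σ⁻¹ b).val.1 = b.val.1) := by
    intro σ hσ b
    have := hσ (σ⁻¹ b)
    rw [Equiv.Perm.apply_inv_self] at this
    exact this.symm
  -- the subsets E = R_D ∩ R_{D^A} and F = R_D \ R_{D^A} of PB
  set E := PB.filter (fun σ => ∀ b, (φ (σ b)).val.1 = (φ b).val.1) with hEdef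
  set F := PB.filter (fun σ => ¬ ∀ b, (φ (σ b)).val.1 = (φ b).val.1) with hFdef
  have hEmem : ∀ σ : Equiv.Perm {x : ℕ × ℕ // x ∈ D}, σ ∈ E ↔
      ((∀ b, (σ b).val.1 = b.val.1) ∧ (∀ b, (φ (σ b)).val.1 = (φ b).val.1)) := by
    intro σ
    rw [hEdef, Finset.mem_filter, hPB]
  have hFmem : ∀ σ : Equiv.Perm {x : ℕ × ℕ // x ∈ D}, σ ∈ F ↔
      ((∀ b, (σ b).val.1 = b.val.1) ∧ ¬ (∀ b, (φ (σ b)).val.1 = (φ b).val.1)) := by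
    intro σ
    rw [hFdef, Finset.mem_filter, hPB]
  -- Step 1: E * ΣY = R(D^A)
  have h1 : (∑ ρ ∈ E, MonoidAlgebra.single ρ (1 : ℂ)) *
      (∑ σ ∈ Y, MonoidAlgebra.single σ (1 : ℂ)) =
      ∑ τ ∈ PA, MonoidAlgebra.single τ (1 : ℂ) := by
    rw [Finset.sum_mul_sum]
    simp only [MonoidAlgebra.single_mul_single, one_mul]
    rw [← Finset.sum_product']
    refine Finset.sum_bij (fun p _ => p.1 * p.2) ?_ ?_ ?_ ?_
    · rintro ⟨ρ, σ⟩ hp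
      rw [Finset.mem_product] at hp
      exact (hPA _).2 (hAmul ρ σ ((hEmem ρ).1 hp.1).2 (hY1 σ hp.2))
    · rintro ⟨ρ, σ⟩ hp ⟨ρ', σ'⟩ hp' heq
      rw [Finset.mem_product] at hp hp'
      simp only at heq
      obtain ⟨σ₀, -, huniq⟩ := hY2 (ρ * σ)
        (hAmul ρ σ ((hEmem ρ).1 hp.1).2 (hY1 σ hp.2))
      have key : ∀ (a : Equiv.Perm {x : ℕ × ℕ // x ∈ D}) (b : _), a ∈ E → b ∈ Y →
          ρ * σ = a * b → b = σ₀ := by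
        intro a b ha hb hab
        refine huniq b ⟨hb, ?_, ?_⟩
        · have : ρ * σ * b⁻¹ = a := by rw [hab, mul_inv_cancel_right]
          rw [this]; exact ((hEmem a).1 ha).1
        · have : ρ * σ * b⁻¹ = a := by rw [hab, mul_inv_cancel_right]
          rw [this]; exact ((hEmem a).1 ha).2
      have hσ : σ = σ₀ := key ρ σ hp.1 hp.2 rfl
      have hσ' : σ' = σ₀ := key ρ' σ' hp'.1 hp'.2 heq
      have hσσ' : σ = σ' := hσ.trans hσ'.symm
      have hρρ' : ρ = ρ' := by
        have := heq
        rw [hσσ'] at this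
        exact mul_right_cancel this
      simp [Prod.ext_iff, hσσ', hρρ']
    · intro τ hτ
      obtain ⟨σ, ⟨hσY, hσB, hσA⟩, -⟩ := hY2 τ ((hPA τ).1 hτ)
      refine ⟨(τ * σ⁻¹, σ), Finset.mem_product.2 ⟨(hEmem _).2 ⟨hσB, hσA⟩, hσY⟩, ?_⟩
      simp [inv_mul_cancel_right]
    · intros; rfl
  -- Step 2: R(D) = E + F
  have h2 : (∑ σ ∈ PB, MonoidAlgebra.single σ (1 : ℂ)) =
      (∑ σ ∈ E, MonoidAlgebra.single σ (1 : ℂ)) +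
      ∑ σ ∈ F, MonoidAlgebra.single σ (1 : ℂ) :=
    (Finset.sum_filter_add_sum_filter_not PB _ _).symm
  -- Step 3: F * E = |E| • F
  have h3 : (∑ l ∈ F, MonoidAlgebra.single l (1 : ℂ)) *
      (∑ ρ ∈ E, MonoidAlgebra.single ρ (1 : ℂ)) =
      E.card • ∑ l ∈ F, MonoidAlgebra.single l (1 : ℂ) := by
    have inner : ∀ ρ ∈ E, (∑ l ∈ F, MonoidAlgebra.single (l * ρ) (1 : ℂ)) =
        ∑ l ∈ F, MonoidAlgebra.single l (1 : ℂ) := by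
      intro ρ hρ
      obtain ⟨hρB, hρA⟩ := (hEmem ρ).1 hρ
      refine Finset.sum_equiv (Equiv.mulRight ρ) (fun l => ?_) (fun l _ => rfl)
      simp only [Equiv.coe_mulRight]
      rw [hFmem, hFmem]
      constructor
      · rintro ⟨hlB, hlA⟩
        refine ⟨hBmul l ρ hlB hρB, fun hA => hlA ?_⟩
        have := hAmul (l * ρ) ρ⁻¹ hA (hAinv ρ hρA)
        rwa [mul_inv_cancel_right] at this
      · rintro ⟨hlB, hlA⟩
        constructor
        · have := hBmul (l * ρ) ρ⁻¹ hlB (hBinv ρ hρB)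
          rwa [mul_inv_cancel_right] at this
        · exact fun hA => hlA (hAmul l ρ hA hρA)
    rw [Finset.sum_mul_sum]
    simp only [MonoidAlgebra.single_mul_single, one_mul]
    rw [Finset.sum_comm, Finset.sum_congr rfl inner, Finset.sum_const]
  -- Step 4 (Garnir-type relation): C * l * R(D^A) = 0 for l ∈ F
  have h4 : ∀ l ∈ F, C * MonoidAlgebra.single l (1 : ℂ) *
      (∑ τ ∈ PA, MonoidAlgebra.single τ (1 : ℂ)) = 0 := by
    intro l hl
    obtain ⟨hlB, hlA⟩ := (hFmem l).1 hl
    -- find a box s with row i1, no box below, mapped by l to a box with one below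
    have hs : ∃ s : {x : ℕ × ℕ // x ∈ D},
        (s.val.1 = i1 ∧ (i2, s.val.2) ∉ D) ∧ (i2, (l s).val.2) ∈ D := by
      by_contra hno
      push_neg at hno
      apply hlA
      set Sf := Finset.univ.filter
        (fun x : {x : ℕ × ℕ // x ∈ D} => x.val.1 = i1 ∧ (i2, x.val.2) ∉ D) with hSf
      have hmapsto : ∀ x ∈ Sf, l x ∈ Sf := by
        intro x hx
        rw [hSf, Finset.mem_filter] at hx ⊢
        exact ⟨Finset.mem_univ _, by rw [hlB x]; exact hx.2.1, hno x hx.2⟩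
      have himg : Sf.image l = Sf := by
        apply Finset.eq_of_subset_of_card_le
        · intro y hy
          obtain ⟨x, hx, rfl⟩ := Finset.mem_image.1 hy
          exact hmapsto x hx
        · rw [Finset.card_image_of_injective _ l.injective]
      intro b
      rw [hφ1 (l b), hφ1 b]
      by_cases hc : b.val.1 = i1 ∧ (i2, b.val.2) ∉ D
      · have hb : b ∈ Sf := by rw [hSf, Finset.mem_filter]; exact ⟨Finset.mem_univ _, hc⟩
        have hlb := hmapsto b hb
        rw [hSf, Finset.mem_filter] at hlb
        rw [if_pos hlb.2, if_pos hc]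
      · have hlb : ¬((l b).val.1 = i1 ∧ (i2, (l b).val.2) ∉ D) := by
          intro hcon
          have : l b ∈ Sf := by rw [hSf, Finset.mem_filter]; exact ⟨Finset.mem_univ _, hcon⟩
          rw [← himg, Finset.mem_image] at this
          obtain ⟨a, ha, hab⟩ := this
          have : a = b := l.injective hab
          rw [this] at ha
          rw [hSf, Finset.mem_filter] at ha
          exact hc ha.2
        rw [if_neg hlb, if_neg hc, hlB b]
    obtain ⟨s, hsS, hsT⟩ := hs
    set u : {x : ℕ × ℕ // x ∈ D} := ⟨(i2, (l s).val.2), hsT⟩ with hu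
    set c := Equiv.swap (l s) u with hc
    set r := Equiv.swap s (l⁻¹ u) with hr
    have hls1 : (l s).val.1 = i1 := by rw [hlB s]; exact hsS.1
    have hune : l s ≠ u := by
      intro h
      apply h12
      rw [← hls1, h]
    -- c is column-preserving
    have hcC : c ∈ PC := by
      rw [hPC]
      intro b
      rcases eq_or_ne b (l s) with hb | hb
      · rw [hb, hc, Equiv.swap_apply_left]
      rcases eq_or_ne b u with hb' | hb'
      · rw [hb', hc, Equiv.swap_apply_right]
      · rw [hc, Equiv.swap_apply_of_ne_of_ne hb hb']
    have hsign : Equiv.Perm.sign c = -1 := Equiv.Perm.sign_swap hune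
    -- c * l = l * r
    have hclr : c * l = l * r := by
      rw [hc, hr, Equiv.swap_mul_eq_mul_swap, Equiv.Perm.inv_apply_self]
    -- r preserves the rows of D^A
    have hrA : ∀ b, (φ (r b)).val.1 = (φ b).val.1 := by
      have hvs : (φ s).val.1 = i2 := by rw [hφ1]; exact if_pos hsS
      have hv1 : (l⁻¹ u).val.1 = i2 := by
        have := hlB (l⁻¹ u)
        rw [Equiv.Perm.apply_inv_self] at this
        exact this.symm
      have hvv : (φ (l⁻¹ u)).val.1 = i2 := by
        rw [hφ1, if_neg, hv1]
        intro hcon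
        exact h12 (by rw [← hcon.1, hv1])
      intro b
      rcases eq_or_ne b s with hb | hb
      · rw [hb, hr, Equiv.swap_apply_left, hvv, hvs]
      rcases eq_or_ne b (l⁻¹ u) with hb' | hb'
      · rw [hb', hr, Equiv.swap_apply_right, hvs, hvv]
      · rw [hr, Equiv.swap_apply_of_ne_of_ne hb hb']
    -- closure of PA under left multiplication by r
    have hPAr : ∀ g, g ∈ PA ↔ r * g ∈ PA := by
      intro g
      rw [hPA, hPA]
      constructor
      · intro hg
        exact hAmul r g hrA hg
      · intro hg
        have := hAmul r⁻¹ (r * g) (hAinv r hrA) hg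
        rwa [inv_mul_cancel_left] at this
    have hPCc : ∀ g, g ∈ PC ↔ g * c ∈ PC := by
      have hcC' := (hPC c).1 hcC
      intro g
      rw [hPC, hPC]
      constructor
      · intro hg b
        rw [Equiv.Perm.mul_apply, hg, hcC']
      · intro hg b
        have h1 := hg (c⁻¹ b)
        rw [Equiv.Perm.mul_apply, Equiv.Perm.apply_inv_self] at h1
        have h2 : (c⁻¹ b).val.2 = b.val.2 := by
          have := hcC' (c⁻¹ b)
          rw [Equiv.Perm.apply_inv_self] at this
          exact this.symm
        rw [h1, h2]
    have e1 : MonoidAlgebra.single r (1 : ℂ) *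
        (∑ τ ∈ PA, MonoidAlgebra.single τ (1 : ℂ)) =
        ∑ τ ∈ PA, MonoidAlgebra.single τ (1 : ℂ) := aux_left_mul r PA hPAr
    have e2 : C * MonoidAlgebra.single c (1 : ℂ) = -C := by
      rw [hCdef]
      exact aux_right_mul_sign c PC hPCc hsign
    set RA := ∑ τ ∈ PA, MonoidAlgebra.single τ (1 : ℂ) with hRA
    have key : C * MonoidAlgebra.single l (1 : ℂ) * RA =
        -(C * MonoidAlgebra.single l (1 : ℂ) * RA) := by
      calc C * MonoidAlgebra.single l (1 : ℂ) * RA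
          = C * MonoidAlgebra.single l (1 : ℂ) * (MonoidAlgebra.single r (1 : ℂ) * RA) := by
            rw [e1]
        _ = C * (MonoidAlgebra.single l (1 : ℂ) * MonoidAlgebra.single r (1 : ℂ)) * RA := by
            rw [← mul_assoc, mul_assoc C]
        _ = C * MonoidAlgebra.single (l * r) (1 : ℂ) * RA := by
            rw [MonoidAlgebra.single_mul_single, one_mul]
        _ = C * MonoidAlgebra.single (c * l) (1 : ℂ) * RA := by rw [← hclr]
        _ = C * (MonoidAlgebra.single c (1 : ℂ) * MonoidAlgebra.single l (1 : ℂ)) * RA := by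
            rw [MonoidAlgebra.single_mul_single, one_mul]
        _ = C * MonoidAlgebra.single c (1 : ℂ) * MonoidAlgebra.single l (1 : ℂ) * RA := by
            rw [← mul_assoc C]
        _ = -C * MonoidAlgebra.single l (1 : ℂ) * RA := by rw [e2]
        _ = -(C * MonoidAlgebra.single l (1 : ℂ) * RA) := by rw [neg_mul, neg_mul]
    have h2X : C * MonoidAlgebra.single l (1 : ℂ) * RA +
        C * MonoidAlgebra.single l (1 : ℂ) * RA = 0 :=
      add_eq_zero_iff_eq_neg.mpr key
    have h2X' : (2 : ℂ) • (C * MonoidAlgebra.single l (1 : ℂ) * RA) = 0 := by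
      rw [two_smul]; exact h2X
    exact (smul_eq_zero.mp h2X').resolve_left two_ne_zero
  -- Step 5: C * F * R(D^A) = 0
  have h5 : C * (∑ l ∈ F, MonoidAlgebra.single l (1 : ℂ)) *
      (∑ τ ∈ PA, MonoidAlgebra.single τ (1 : ℂ)) = 0 := by
    rw [show C * (∑ l ∈ F, MonoidAlgebra.single l (1 : ℂ))
        = ∑ l ∈ F, C * MonoidAlgebra.single l (1 : ℂ) from Finset.mul_sum _ _ _,
      Finset.sum_mul]
    exact Finset.sum_eq_zero h4
  -- |E| ≠ 0
  have hE1 : (1 : Equiv.Perm {x : ℕ × ℕ // x ∈ D}) ∈ E := by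
    rw [hEmem]
    constructor <;> intro b <;> rw [Equiv.Perm.one_apply]
  have hEcard : (E.card : ℂ) ≠ 0 := by
    simp only [ne_eq, Nat.cast_eq_zero, Finset.card_eq_zero]
    intro h
    rw [h] at hE1
    exact absurd hE1 (Finset.notMem_empty _)
  -- C * F * ΣY = 0
  have h6 : C * (∑ l ∈ F, MonoidAlgebra.single l (1 : ℂ)) *
      (∑ σ ∈ Y, MonoidAlgebra.single σ (1 : ℂ)) = 0 := by
    have hz : (E.card : ℂ) • (C * (∑ l ∈ F, MonoidAlgebra.single l (1 : ℂ)) *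
        (∑ σ ∈ Y, MonoidAlgebra.single σ (1 : ℂ))) = 0 := by
      have : C * ((∑ l ∈ F, MonoidAlgebra.single l (1 : ℂ)) *
          (∑ ρ ∈ E, MonoidAlgebra.single ρ (1 : ℂ))) *
          (∑ σ ∈ Y, MonoidAlgebra.single σ (1 : ℂ)) = 0 := by
        rw [← mul_assoc, mul_assoc (C * (∑ l ∈ F, MonoidAlgebra.single l (1 : ℂ))), h1]
        exact h5
      rw [h3, mul_smul_comm, smul_mul_assoc] at this
      rw [Nat.cast_smul_eq_nsmul]
      exact this
    exact (smul_eq_zero.mp hz).resolve_left hEcard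
  -- conclusion
  rw [h2, mul_add, add_mul, mul_assoc C, h1, h6, add_zero]
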